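/- Let α : [0.8, 1] → ℝ be differentiable with √2 < α'(x) < 2 for all x ∈ [0.8,1], let 0 < ε₁ and set α̂(x) = α(x) − (ε₁/3)x. Suppose x ∈ [0.8,1] is such that x, α̂(x), α̂²(x), α(x), α²(x) all lie in [0.8,1]. Then 0.8·(2 + √2 + 1)·(ε₁/3) ≤ α³(x) − α̂³(x) ≤ (2² + 2 + 1)·(ε₁/3), and hence 1.1·ε₁ < α³(x) − α̂³(x) < 2.4·ε₁. -/
import Mathlib


set_option maxHeartbeats 1000000 in
/-- Three-iterate deviation estimate between α and the shifted map α̂ = α − (ε₁/3)·id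
on [0.8,1]: 0.8(2+√2+1)(ε₁/3) ≤ α³(x) − α̂³(x) ≤ (2²+2+1)(ε₁/3), hence the deviation
lies strictly between 1.1·ε₁ and 2.4·ε₁. -/
theorem stmt7 (α ah : ℝ → ℝ) (ε₁ : ℝ) (hε : 0 < ε₁)
    (hah : ∀ y, ah y = α y - ε₁ / 3 * y)
    (hdiff : ∀ y ∈ Set.Icc (0.8 : ℝ) 1, DifferentiableAt ℝ α y)
    (hderiv : ∀ y ∈ Set.Icc (0.8 : ℝ) 1, Real.sqrt 2 < deriv α y ∧ deriv α y < 2)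
    (x : ℝ) (hx : x ∈ Set.Icc (0.8 : ℝ) 1)
    (h1 : ah x ∈ Set.Icc (0.8 : ℝ) 1) (h2 : ah^[2] x ∈ Set.Icc (0.8 : ℝ) 1)
    (h3 : α x ∈ Set.Icc (0.8 : ℝ) 1) (h4 : α^[2] x ∈ Set.Icc (0.8 : ℝ) 1) :
    (0.8 * (2 + Real.sqrt 2 + 1) * (ε₁ / 3) ≤ α^[3] x - ah^[3] x ∧
      α^[3] x - ah^[3] x ≤ (2 ^ 2 + 2 + 1) * (ε₁ / 3)) ∧
    (1.1 * ε₁ < α^[3] x - ah^[3] x ∧ α^[3] x - ah^[3] x < 2.4 * ε₁) := by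
  set s := Real.sqrt 2 with hs
  have hs0 : (0:ℝ) ≤ s := Real.sqrt_nonneg 2
  have hssq : s * s = 2 := Real.mul_self_sqrt (by norm_num)
  have hslb : (1.41:ℝ) < s := by
    nlinarith [hssq, hs0]
  set μ := ε₁ / 3 with hμ
  have hμ0 : 0 < μ := by positivity
  have hconv : Convex ℝ (Set.Icc (0.8:ℝ) 1) := convex_Icc _ _
  have hcont : ContinuousOn α (Set.Icc (0.8:ℝ) 1) := fun y hy =>
    (hdiff y hy).continuousAt.continuousWithinAt
  have hdiff' : DifferentiableOn ℝ α (interior (Set.Icc (0.8:ℝ) 1)) := fun y hy =>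
    (hdiff y (interior_subset hy)).differentiableWithinAt
  have lo : ∀ u ∈ Set.Icc (0.8:ℝ) 1, ∀ v ∈ Set.Icc (0.8:ℝ) 1, u ≤ v →
      s * (v - u) ≤ α v - α u :=
    hconv.mul_sub_le_image_sub_of_le_deriv hcont hdiff'
      (fun y hy => (hderiv y (interior_subset hy)).1.le)
  have hi : ∀ u ∈ Set.Icc (0.8:ℝ) 1, ∀ v ∈ Set.Icc (0.8:ℝ) 1, u ≤ v →
      α v - α u ≤ 2 * (v - u) :=
    hconv.image_sub_le_mul_sub_of_deriv_le hcont hdiff'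
      (fun y hy => (hderiv y (interior_subset hy)).2.le)
  -- notation for the iterates
  have e2a : α^[2] x = α (α x) := by
    simp [Function.iterate_succ_apply']
  have e3a : α^[3] x = α (α^[2] x) := by
    rw [Function.iterate_succ_apply']
  have e2b : ah^[2] x = ah (ah x) := by
    simp [Function.iterate_succ_apply']
  have e3b : ah^[3] x = ah (ah^[2] x) := by
    rw [Function.iterate_succ_apply']
  obtain ⟨hx0, hx1⟩ := hx
  -- step 1
  have hb1a1 : ah x ≤ α x := by rw [hah]; nlinarith
  have d1lo : 0.8 * μ ≤ α x - ah x := by rw [hah]; nlinarith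
  have d1hi : α x - ah x ≤ μ := by rw [hah]; nlinarith
  -- step 2
  have hstep2 : α^[2] x - ah^[2] x = (α (α x) - α (ah x)) + μ * ah x := by
    rw [e2a, e2b, hah (ah x)]; ring
  have hlo2 := lo _ h1 _ h3 hb1a1
  have hhi2 := hi _ h1 _ h3 hb1a1
  have d2lo : s * (0.8 * μ) + 0.8 * μ ≤ α^[2] x - ah^[2] x := by
    rw [hstep2]
    have : s * (0.8 * μ) ≤ s * (α x - ah x) := by nlinarith
    nlinarith [h1.1]
  have d2hi : α^[2] x - ah^[2] x ≤ 2 * μ + μ := by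
    rw [hstep2]
    nlinarith [h1.2]
  -- b2 ≤ a2
  have hb2a2 : ah^[2] x ≤ α^[2] x := by
    have hd2 : 0 ≤ α^[2] x - ah^[2] x := by nlinarith [h1.1]
    linarith
  -- step 3
  have hstep3 : α^[3] x - ah^[3] x = (α (α^[2] x) - α (ah^[2] x)) + μ * ah^[2] x := by
    rw [e3a, e3b, hah (ah^[2] x)]; ring
  have hlo3 := lo _ h2 _ h4 hb2a2
  have hhi3 := hi _ h2 _ h4 hb2a2
  have d3lo : 0.8 * (2 + s + 1) * μ ≤ α^[3] x - ah^[3] x := by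
    rw [hstep3]
    have h1' : s * (s * (0.8 * μ) + 0.8 * μ) ≤ s * (α^[2] x - ah^[2] x) :=
      mul_le_mul_of_nonneg_left d2lo hs0
    have hexp : s * (s * (0.8 * μ) + 0.8 * μ) = (s * s) * (0.8 * μ) + s * (0.8 * μ) := by
      ring
    rw [hssq] at hexp
    have hb2 : 0.8 * μ ≤ μ * ah^[2] x := by
      have := mul_le_mul_of_nonneg_left h2.1 hμ0.le
      linarith
    have : 0.8 * (2 + s + 1) * μ = 2 * (0.8 * μ) + s * (0.8 * μ) + 0.8 * μ := by ring
    linarith [hlo3]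
  have d3hi : α^[3] x - ah^[3] x ≤ (2 ^ 2 + 2 + 1) * μ := by
    rw [hstep3]
    have hb2 : μ * ah^[2] x ≤ μ := by
      have := mul_le_mul_of_nonneg_left h2.2 hμ0.le
      linarith
    have : (2:ℝ) ^ 2 + 2 + 1 = 7 := by norm_num
    linarith [hhi3, d2hi]
  have key1 : 1.1 * ε₁ < 0.8 * (2 + s + 1) * μ := by
    rw [hμ]
    nlinarith [mul_lt_mul_of_pos_left hslb hε]
  have key2 : ((2:ℝ) ^ 2 + 2 + 1) * μ < 2.4 * ε₁ := by
    rw [hμ]; nlinarith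
  exact ⟨⟨d3lo, d3hi⟩, by linarith, by linarith⟩
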